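/- In an algebraic convex geometry (X, φ), for every x ∈ X, the closed set φ({x}) is a completely join-irreducible element of the lattice of closed sets Cld(X,φ). -/
import Mathlib


/-- φ is a closure operator: extensive, monotone, idempotent. -/
def IsClosureOp {X : Type*} (φ : Set X → Set X) : Prop :=
  (∀ A, A ⊆ φ A) ∧ (∀ A B, A ⊆ B → φ A ⊆ φ B) ∧ (∀ A, φ (φ A) = φ A)

/-- φ is algebraic (finitary): the closure of a set is the union of closures of its
finite subsets. -/
def IsAlgebraicOp {X : Type*} (φ : Set X → Set X) : Prop :=
  ∀ A, φ A = ⋃₀ {T | ∃ B, B ⊆ A ∧ B.Finite ∧ T = φ B}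

/-- The anti-exchange property. -/
def AntiExchange {X : Type*} (φ : Set X → Set X) : Prop :=
  ∀ (x y : X) (A : Set X), x ≠ y → φ A = A → x ∉ A →
    x ∈ φ (A ∪ {y}) → y ∉ φ (A ∪ {x})

/-- A convex geometry: a zero-closure operator with the anti-exchange property. -/
def IsConvexGeometry {X : Type*} (φ : Set X → Set X) : Prop :=
  IsClosureOp φ ∧ φ ∅ = ∅ ∧ AntiExchange φ

/-- An algebraic convex geometry. -/
def IsAlgConvexGeometry {X : Type*} (φ : Set X → Set X) : Prop :=
  IsClosureOp φ ∧ IsAlgebraicOp φ ∧ φ ∅ = ∅ ∧ AntiExchange φ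

/-- An algebraic subset of Pow X : closed under arbitrary intersections
(with ⋂₀ ∅ = X) and under unions of nonempty up-directed subfamilies. -/
def IsAlgSubset {X : Type*} (F : Set (Set X)) : Prop :=
  (∀ S ⊆ F, ⋂₀ S ∈ F) ∧
  (∀ S ⊆ F, S.Nonempty → (∀ A ∈ S, ∀ B ∈ S, ∃ C ∈ S, A ∪ B ⊆ C) → ⋃₀ S ∈ F)

/-- A maximal chain in the lattice of φ-closed sets. -/
def IsMaxChainOfClosed {X : Type*} (φ : Set X → Set X) (C : Set (Set X)) : Prop :=
  C ⊆ {Y | φ Y = Y} ∧ IsChain (· ⊆ ·) C ∧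
  ∀ T, φ T = T → (∀ A ∈ C, T ⊆ A ∨ A ⊆ T) → T ∈ C

/-- In an algebraic convex geometry, φ({x}) is completely join irreducible in the
lattice of closed sets: whenever φ({x}) is the join (i.e. closure of the union) of a
set S of closed sets, φ({x}) ∈ S. -/
theorem stmt1 {X : Type*} (φ : Set X → Set X)
    (hclo : IsClosureOp φ) (halg : IsAlgebraicOp φ) (hzero : φ ∅ = ∅)
    (haep : AntiExchange φ) (x : X) :
    ∀ S : Set (Set X), (∀ A ∈ S, φ A = A) → φ {x} = φ (⋃₀ S) → φ {x} ∈ S := by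
  obtain ⟨hext, hmono, hidem⟩ := hclo
  intro S hS hx
  have hxcl : x ∈ φ {x} := hext _ rfl
  by_cases hxin : x ∈ ⋃₀ S
  · obtain ⟨A, hA, hxA⟩ := hxin
    have h1 : φ {x} ⊆ A := by
      have := hmono {x} A (by simpa using hxA)
      rwa [hS A hA] at this
    have h2 : A ⊆ φ {x} := by
      rw [hx]
      exact subset_trans (Set.subset_sUnion_of_mem hA) (hext _)
    have : A = φ {x} := Set.Subset.antisymm h2 h1
    rwa [this] at hA
  · exfalso
    set Z := φ {x} \ {x} with hZdef
    have hZsub : ⋃₀ S ⊆ Z := by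
      intro a ha
      refine ⟨by rw [hx]; exact hext _ ha, ?_⟩
      intro h
      rw [Set.mem_singleton_iff] at h
      exact hxin (h ▸ ha)
    have hxZ : x ∈ φ Z := hmono _ _ hZsub (hx ▸ hxcl)
    -- extract a finite subset
    rw [halg Z] at hxZ
    obtain ⟨T, ⟨B, hBZ, hBfin, rfl⟩, hxB⟩ := hxZ
    -- minimal finite subset via Nat.find
    have hexists : ∃ n, ∃ F : Finset X, F.card = n ∧ ↑F ⊆ Z ∧ x ∈ φ ↑F := by
      refine ⟨hBfin.toFinset.card, hBfin.toFinset, rfl, ?_, ?_⟩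
      · rwa [Set.Finite.coe_toFinset]
      · rwa [Set.Finite.coe_toFinset]
    classical
    obtain ⟨F, hFcard, hFZ, hxF⟩ := Nat.find_spec hexists
    have hmin : ∀ G : Finset X, G.card < Nat.find hexists → ↑G ⊆ Z → x ∉ φ ↑G := by
      intro G hGcard hGZ hxG
      exact Nat.find_min hexists hGcard ⟨G, rfl, hGZ, hxG⟩
    have hFne : F.Nonempty := by
      rcases F.eq_empty_or_nonempty with h | h
      · subst h
        simp only [Finset.coe_empty] at hxF
        rw [hzero] at hxF
        exact hxF.elim
      · exact h
    obtain ⟨y, hyF⟩ := hFne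
    set A' := F.erase y with hA'def
    have hA'card : A'.card < Nat.find hexists := by
      rw [← hFcard]
      exact Finset.card_erase_lt_of_mem hyF
    have hA'Z : ↑A' ⊆ Z := subset_trans (by exact_mod_cast Finset.coe_subset.mpr (Finset.erase_subset y F)) hFZ
    have hxA' : x ∉ φ ↑A' := hmin A' hA'card hA'Z
    have hyZ : y ∈ Z := hFZ hyF
    have hxy : x ≠ y := fun h => hyZ.2 (by rw [← h]; rfl)
    have hxnA : x ∉ φ (↑A' : Set X) := hxA'
    -- x ∈ φ (φ A' ∪ {y})
    have hFsub : (↑F : Set X) ⊆ φ ↑A' ∪ {y} := by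
      intro z hz
      by_cases hzy : z = y
      · right; exact hzy
      · left
        exact hext _ (Finset.mem_coe.mpr (Finset.mem_erase.mpr ⟨hzy, hz⟩))
    have hxmem : x ∈ φ (φ ↑A' ∪ {y}) := hmono _ _ hFsub hxF
    have hae := haep x y (φ ↑A') hxy (hidem _) hxnA hxmem
    apply hae
    -- y ∈ φ (φ A' ∪ {x}) since y ∈ φ {x} ⊆ φ (φ A' ∪ {x})
    have : φ {x} ⊆ φ (φ ↑A' ∪ {x}) := hmono _ _ (by intro z hz; right; exact hz)
    exact this hyZ.1
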